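/- Let s ≥ 3 be an integer and n = 2^s − 1. Let A(s) denote the maximum size of a family of 3-dimensional linear subspaces of 𝔽₂^s such that any two distinct members intersect in a subspace of dimension at most 1. Then ar(n, F4) ≥ m(n) + A(s). -/

import Mathlib

/-- The number of colors used by the edge-coloring `col` on the `p`-element
subsets (edges) of the vertex set `Fin n`. -/
def numColors (n p : ℕ) (col : Finset (Fin n) → ℕ) : ℕ :=
  (((Finset.univ : Finset (Finset (Fin n))).filter (fun e => e.card = p)).image col).card

/-- An edge-coloring of `K_n^(p)` is rainbow cancellative if there are no three
edges `A, B, C` with pairwise distinct colors such that `A △ B ⊆ C`. -/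
def RainbowCancellative (n p : ℕ) (col : Finset (Fin n) → ℕ) : Prop :=
  ∀ A B C : Finset (Fin n), A.card = p → B.card = p → C.card = p →
    col A ≠ col B → col A ≠ col C → col B ≠ col C →
    ¬ ((A \ B) ∪ (B \ A) ⊆ C)
/-- Rainbow `F4`-free: no four distinct vertices `a b c d` such that the triples
`abc, abd, bcd` receive pairwise distinct colors. -/
def RainbowF4Free (n : ℕ) (col : Finset (Fin n) → ℕ) : Prop :=
  ∀ a b c d : Fin n, a ≠ b → a ≠ c → a ≠ d → b ≠ c → b ≠ d → c ≠ d →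
    ¬ (col {a, b, c} ≠ col {a, b, d} ∧ col {a, b, c} ≠ col {b, c, d} ∧
       col {a, b, d} ≠ col {b, c, d})

/-- Rainbow `F5`-free: no five distinct vertices `a b c d e` such that the triples
`abc, abd, cde` receive pairwise distinct colors. -/
def RainbowF5Free (n : ℕ) (col : Finset (Fin n) → ℕ) : Prop :=
  ∀ a b c d e : Fin n,
    a ≠ b → a ≠ c → a ≠ d → a ≠ e → b ≠ c → b ≠ d → b ≠ e → c ≠ d → c ≠ e → d ≠ e →
    ¬ (col {a, b, c} ≠ col {a, b, d} ∧ col {a, b, c} ≠ col {c, d, e} ∧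
       col {a, b, d} ≠ col {c, d, e})

/-- A partial Steiner triple system on the vertex set `Fin n`: a family of
3-element sets in which every pair of vertices lies in at most one triple
(equivalently, two distinct triples meet in at most one vertex). -/
def IsPSTS (n : ℕ) (P : Finset (Finset (Fin n))) : Prop :=
  (∀ T ∈ P, T.card = 3) ∧
  ∀ T1 ∈ P, ∀ T2 ∈ P, T1 ≠ T2 → (T1 ∩ T2).card ≤ 1

/-- `mPSTS n` is the maximum number of triples in a partial Steiner triple
system on `n` vertices. -/
noncomputable def mPSTS (n : ℕ) : ℕ :=
  sSup {k : ℕ | ∃ P : Finset (Finset (Fin n)), IsPSTS n P ∧ P.card = k}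

/-- `maxSubspaceFamily s` is the maximum size of a family of 3-dimensional
linear subspaces of `𝔽₂^s` any two distinct members of which intersect in a
subspace of dimension at most 1. -/
noncomputable def maxSubspaceFamily (s : ℕ) : ℕ :=
  sSup {k : ℕ | ∃ F : Finset (Submodule (ZMod 2) (Fin s → ZMod 2)),
    (∀ W ∈ F, Module.finrank (ZMod 2) W = 3) ∧
    (∀ W1 ∈ F, ∀ W2 ∈ F, W1 ≠ W2 → Module.finrank (ZMod 2) ↥(W1 ⊓ W2) ≤ 1) ∧
    F.card = k}

open Finset

lemma aux_triple_card {α : Type*} [DecidableEq α] {a b c : α}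
    (hab : a ≠ b) (hac : a ≠ c) (hbc : b ≠ c) : ({a, b, c} : Finset α).card = 3 := by
  rw [card_insert_of_notMem (by simp [hab, hac]), card_insert_of_notMem (by simp [hbc]),
    card_singleton]

lemma aux_triple_sum {α β : Type*} [DecidableEq α] [AddCommMonoid β] (f : α → β) {a b c : α}
    (hab : a ≠ b) (hac : a ≠ c) (hbc : b ≠ c) :
    ∑ i ∈ ({a, b, c} : Finset α), f i = f a + f b + f c := by
  rw [sum_insert (by simp [hab, hac]), sum_insert (by simp [hbc]), sum_singleton, add_assoc]

lemma aux_exists_third {α : Type*} [DecidableEq α] {T : Finset α} (hT : T.card = 3) {x y : α}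
    (hx : x ∈ T) (hy : y ∈ T) (hxy : x ≠ y) : ∃ z, z ≠ x ∧ z ≠ y ∧ T = {x, y, z} := by
  have hsub : ({x, y} : Finset α) ⊆ T := by
    intro t ht; simp only [mem_insert, mem_singleton] at ht
    rcases ht with rfl | rfl <;> assumption
  have h1 : (T \ {x, y}).card = 1 := by
    rw [card_sdiff_of_subset hsub, hT, card_pair hxy]
  obtain ⟨z, hz⟩ := Finset.card_eq_one.mp h1
  have hzmem : z ∈ T \ ({x, y} : Finset α) := by rw [hz]; exact mem_singleton_self z
  rw [mem_sdiff, mem_insert, mem_singleton] at hzmem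
  push_neg at hzmem
  refine ⟨z, hzmem.2.1, hzmem.2.2, ?_⟩
  have hsub2 : ({x, y, z} : Finset α) ⊆ T := by
    intro t ht; simp only [mem_insert, mem_singleton] at ht
    rcases ht with rfl | rfl | rfl
    exacts [hx, hy, hzmem.1]
  exact (Finset.eq_of_subset_of_card_le hsub2
    (by rw [hT, aux_triple_card hxy (Ne.symm hzmem.2.1) (Ne.symm hzmem.2.2)])).symm

lemma aux_two_of_card {α : Type*} {T : Finset α} (h : 2 ≤ T.card) :
    ∃ x ∈ T, ∃ y ∈ T, x ≠ y := by
  have h2 : 1 < T.card := h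
  rw [Finset.one_lt_card_iff] at h2
  obtain ⟨x, y, hx, hy, hxy⟩ := h2
  exact ⟨x, hx, y, hy, hxy⟩

/-- Counting pairs covered by a pairwise almost-disjoint family of triples. -/
lemma aux_biUnion_card {α : Type*} [DecidableEq α] (Q : Finset (Finset α))
    (h3 : ∀ T ∈ Q, T.card = 3)
    (hint : ∀ T1 ∈ Q, ∀ T2 ∈ Q, T1 ≠ T2 → (T1 ∩ T2).card ≤ 1) :
    (Q.biUnion fun T => T.powersetCard 2).card = 3 * Q.card := by
  rw [Finset.card_biUnion]
  · rw [Finset.sum_congr rfl fun T hT => by rw [Finset.card_powersetCard, h3 T hT]]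
    simp [mul_comm]
  · intro T1 h1 T2 h2 hne
    show Disjoint (T1.powersetCard 2) (T2.powersetCard 2)
    rw [Finset.disjoint_left]
    intro p hp1 hp2
    rw [mem_powersetCard] at hp1 hp2
    have hsub : p ⊆ T1 ∩ T2 := subset_inter hp1.1 hp2.1
    have hle := Finset.card_le_card hsub
    rw [hp1.2] at hle
    exact absurd (hle.trans (hint T1 h1 T2 h2 hne)) (by norm_num)

lemma aux_zmod2 : ∀ a : ZMod 2, a + a = 0 := by decide
lemma aux_zmod2' : ∀ a : ZMod 2, a = 0 ∨ a = 1 := by decide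

lemma aux_force {R M : Type*} [Ring R] [AddCommGroup M] [Module R M]
    (W : Submodule R M) {x y z : M} (h : x + y + z = 0) (hy : y ∈ W) (hz : z ∈ W) :
    x ∈ W := by
  have hx : x = -(y + z) := eq_neg_of_add_eq_zero_left (by rw [← add_assoc]; exact h)
  rw [hx]; exact W.neg_mem (W.add_mem hy hz)

/-- For `s ≥ 3` and `n = 2^s - 1`, `ar(n, F4) ≥ m(n) + A(s)`. -/
theorem ar_F4_lower_projective (s : ℕ) (hs : 3 ≤ s) :
    ∃ col : Finset (Fin (2 ^ s - 1)) → ℕ,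
      RainbowF4Free (2 ^ s - 1) col ∧
      mPSTS (2 ^ s - 1) + maxSubspaceFamily s ≤ numColors (2 ^ s - 1) 3 col := by
  classical
  haveI : Fact (Nat.Prime 2) := ⟨by norm_num⟩
  set n := 2 ^ s - 1 with hn
  -- the vertex identification with nonzero vectors
  obtain ⟨v, hv, hv0, hvs⟩ : ∃ v : Fin n → (Fin s → ZMod 2), Function.Injective v ∧
      (∀ i, v i ≠ 0) ∧ ∀ w : Fin s → ZMod 2, w ≠ 0 → ∃ i, v i = w := by
    have hcard : Fintype.card {w : Fin s → ZMod 2 // w ≠ 0} = n := by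
      have := Set.card_ne_eq (0 : Fin s → ZMod 2)
      rw [hn]; simp [ZMod.card]
    have e : Fin n ≃ {w : Fin s → ZMod 2 // w ≠ 0} :=
      Fintype.equivOfCardEq (by rw [Fintype.card_fin, hcard])
    refine ⟨fun i => (e i).1, fun i j h => e.injective (Subtype.ext h), fun i => (e i).2,
      fun w hw => ⟨e.symm ⟨w, hw⟩, by simp⟩⟩
  have hchar : ∀ w : Fin s → ZMod 2, w + w = 0 := fun w => funext fun j => aux_zmod2 (w j)
  -- the extremal subspace family
  obtain ⟨F, hF3, hF1, hFcard⟩ : ∃ F : Finset (Submodule (ZMod 2) (Fin s → ZMod 2)),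
      (∀ W ∈ F, Module.finrank (ZMod 2) W = 3) ∧
      (∀ W1 ∈ F, ∀ W2 ∈ F, W1 ≠ W2 → Module.finrank (ZMod 2) ↥(W1 ⊓ W2) ≤ 1) ∧
      F.card = maxSubspaceFamily s := by
    haveI : Finite (Submodule (ZMod 2) (Fin s → ZMod 2)) :=
      Finite.of_injective _ SetLike.coe_injective
    haveI := Fintype.ofFinite (Submodule (ZMod 2) (Fin s → ZMod 2))
    simp only [maxSubspaceFamily]
    exact Nat.sSup_mem (s := {k : ℕ | ∃ F : Finset (Submodule (ZMod 2) (Fin s → ZMod 2)),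
        (∀ W ∈ F, Module.finrank (ZMod 2) W = 3) ∧
        (∀ W1 ∈ F, ∀ W2 ∈ F, W1 ≠ W2 → Module.finrank (ZMod 2) ↥(W1 ⊓ W2) ≤ 1) ∧
        F.card = k}) ⟨0, ∅, by simp, by simp, rfl⟩
      ⟨Fintype.card (Submodule (ZMod 2) (Fin s → ZMod 2)), by
        rintro k ⟨F, -, -, rfl⟩; exact Finset.card_le_univ F⟩
  -- injections into ℕ for colors
  obtain ⟨encT, hencT⟩ := exists_injective_nat (Finset (Fin n))
  obtain ⟨encW, hencW⟩ := exists_injective_nat (Submodule (ZMod 2) (Fin s → ZMod 2))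
  -- the coloring
  set col : Finset (Fin n) → ℕ := fun T =>
    if T.card = 3 ∧ ∑ i ∈ T, v i = 0 then 3 * encT T
    else if h2 : ∃ W, W ∈ F ∧ ∀ i ∈ T, v i ∈ W then 3 * encW h2.choose + 1
    else 2 with hcol
  -- uniqueness of the containing subspace
  have huniq : ∀ W1 W2, W1 ∈ F → W2 ∈ F → ∀ x y : Fin n, x ≠ y →
      v x ∈ W1 → v y ∈ W1 → v x ∈ W2 → v y ∈ W2 → W1 = W2 := by
    intro W1 W2 h1 h2 x y hxy hx1 hy1 hx2 hy2
    by_contra hne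
    have hle := hF1 W1 h1 W2 h2 hne
    obtain ⟨g, hg⟩ := finrank_le_one_iff.mp hle
    have hxm : v x ∈ W1 ⊓ W2 := Submodule.mem_inf.mpr ⟨hx1, hx2⟩
    have hym : v y ∈ W1 ⊓ W2 := Submodule.mem_inf.mpr ⟨hy1, hy2⟩
    have hone : ∀ (u : Fin s → ZMod 2) (hu : u ∈ W1 ⊓ W2), u ≠ 0 →
        (⟨u, hu⟩ : ↥(W1 ⊓ W2)) = g := by
      intro u hu hu0
      obtain ⟨c, hc⟩ := hg ⟨u, hu⟩
      rcases aux_zmod2' c with rfl | rfl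
      · exfalso; apply hu0
        have := congrArg Subtype.val hc
        simpa using this.symm
      · simpa using hc.symm
    have : v x = v y := congrArg Subtype.val
      ((hone (v x) hxm (hv0 x)).trans (hone (v y) hym (hv0 y)).symm)
    exact hxy (hv this)
  -- color characterizations
  have hcol_line : ∀ T : Finset (Fin n), T.card = 3 → (∑ i ∈ T, v i) = 0 →
      col T = 3 * encT T := by
    intro T h1 h2
    simp only [hcol]
    rw [if_pos ⟨h1, h2⟩]
  have hcol_W : ∀ T : Finset (Fin n), T.card = 3 → (∑ i ∈ T, v i) ≠ 0 →
      ∀ W, W ∈ F → (∀ i ∈ T, v i ∈ W) → col T = 3 * encW W + 1 := by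
    intro T h1 h2 W hWF hTW
    have hex : ∃ W, W ∈ F ∧ ∀ i ∈ T, v i ∈ W := ⟨W, hWF, hTW⟩
    simp only [hcol]
    rw [if_neg (by tauto), dif_pos hex]
    obtain ⟨x, hx, y, hy, hxy⟩ := aux_two_of_card (by omega : 2 ≤ T.card)
    have hcs := hex.choose_spec
    rw [huniq hex.choose W hcs.1 hWF x y hxy (hcs.2 x hx) (hcs.2 y hy) (hTW x hx) (hTW y hy)]
  have hcol_none : ∀ T : Finset (Fin n), T.card = 3 → (∑ i ∈ T, v i) ≠ 0 →
      (¬ ∃ W, W ∈ F ∧ ∀ i ∈ T, v i ∈ W) → col T = 2 := by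
    intro T h1 h2 h3
    simp only [hcol]
    rw [if_neg (by tauto), dif_neg h3]
  have hmem3 : ∀ (x y z : Fin n) (W : Submodule (ZMod 2) (Fin s → ZMod 2)),
      v x ∈ W → v y ∈ W → v z ∈ W → ∀ i ∈ ({x, y, z} : Finset (Fin n)), v i ∈ W := by
    intro x y z W h1 h2 h3 i hi
    simp only [mem_insert, mem_singleton] at hi
    rcases hi with rfl | rfl | rfl <;> assumption
  refine ⟨col, ?_, ?_⟩
  · -- Rainbow F4-free
    intro a b c d hab hac had hbc hbd hcd h
    obtain ⟨h12, h13, h23⟩ := h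
    have hT1c : ({a, b, c} : Finset (Fin n)).card = 3 := aux_triple_card hab hac hbc
    have hT2c : ({a, b, d} : Finset (Fin n)).card = 3 := aux_triple_card hab had hbd
    have hT3c : ({b, c, d} : Finset (Fin n)).card = 3 := aux_triple_card hbc hbd hcd
    have hS1 : ∑ i ∈ ({a, b, c} : Finset (Fin n)), v i = v a + v b + v c :=
      aux_triple_sum v hab hac hbc
    have hS2 : ∑ i ∈ ({a, b, d} : Finset (Fin n)), v i = v a + v b + v d :=
      aux_triple_sum v hab had hbd
    have hS3 : ∑ i ∈ ({b, c, d} : Finset (Fin n)), v i = v b + v c + v d :=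
      aux_triple_sum v hbc hbd hcd
    by_cases L1 : v a + v b + v c = 0 <;> by_cases L2 : v a + v b + v d = 0
    · exact hcd (hv (by linear_combination L1 - L2))
    · by_cases L3 : v b + v c + v d = 0
      · exact had (hv (by linear_combination L1 - L3))
      · -- only T1 is a line; show col T2 = col T3
        apply h23
        by_cases hQ2 : ∃ W, W ∈ F ∧ ∀ i ∈ ({a, b, d} : Finset (Fin n)), v i ∈ W
        · obtain ⟨W, hWF, hW⟩ := hQ2
          have hva : v a ∈ W := hW a (by simp)
          have hvb : v b ∈ W := hW b (by simp)
          have hvd : v d ∈ W := hW d (by simp)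
          have hvc : v c ∈ W := aux_force W (by linear_combination L1 : v c + v a + v b = 0) hva hvb
          rw [hcol_W _ hT2c (by rw [hS2]; exact L2) W hWF hW,
            hcol_W _ hT3c (by rw [hS3]; exact L3) W hWF (hmem3 b c d W hvb hvc hvd)]
        · by_cases hQ3 : ∃ W, W ∈ F ∧ ∀ i ∈ ({b, c, d} : Finset (Fin n)), v i ∈ W
          · exfalso
            obtain ⟨W, hWF, hW⟩ := hQ3
            have hvb : v b ∈ W := hW b (by simp)
            have hvc : v c ∈ W := hW c (by simp)
            have hvd : v d ∈ W := hW d (by simp)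
            have hva : v a ∈ W := aux_force W L1 hvb hvc
            exact hQ2 ⟨W, hWF, hmem3 a b d W hva hvb hvd⟩
          · rw [hcol_none _ hT2c (by rw [hS2]; exact L2) hQ2,
              hcol_none _ hT3c (by rw [hS3]; exact L3) hQ3]
    · by_cases L3 : v b + v c + v d = 0
      · exact hac (hv (by linear_combination L2 - L3))
      · -- only T2 is a line; show col T1 = col T3
        apply h13
        by_cases hQ1 : ∃ W, W ∈ F ∧ ∀ i ∈ ({a, b, c} : Finset (Fin n)), v i ∈ W
        · obtain ⟨W, hWF, hW⟩ := hQ1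
          have hva : v a ∈ W := hW a (by simp)
          have hvb : v b ∈ W := hW b (by simp)
          have hvc : v c ∈ W := hW c (by simp)
          have hvd : v d ∈ W := aux_force W (by linear_combination L2 : v d + v a + v b = 0) hva hvb
          rw [hcol_W _ hT1c (by rw [hS1]; exact L1) W hWF hW,
            hcol_W _ hT3c (by rw [hS3]; exact L3) W hWF (hmem3 b c d W hvb hvc hvd)]
        · by_cases hQ3 : ∃ W, W ∈ F ∧ ∀ i ∈ ({b, c, d} : Finset (Fin n)), v i ∈ W
          · exfalso
            obtain ⟨W, hWF, hW⟩ := hQ3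
            have hvb : v b ∈ W := hW b (by simp)
            have hvc : v c ∈ W := hW c (by simp)
            have hvd : v d ∈ W := hW d (by simp)
            have hva : v a ∈ W := aux_force W (by linear_combination L2 : v a + v b + v d = 0) hvb hvd
            exact hQ1 ⟨W, hWF, hmem3 a b c W hva hvb hvc⟩
          · rw [hcol_none _ hT1c (by rw [hS1]; exact L1) hQ1,
              hcol_none _ hT3c (by rw [hS3]; exact L3) hQ3]
    · by_cases L3 : v b + v c + v d = 0
      · -- only T3 is a line; show col T1 = col T2
        apply h12
        by_cases hQ1 : ∃ W, W ∈ F ∧ ∀ i ∈ ({a, b, c} : Finset (Fin n)), v i ∈ W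
        · obtain ⟨W, hWF, hW⟩ := hQ1
          have hva : v a ∈ W := hW a (by simp)
          have hvb : v b ∈ W := hW b (by simp)
          have hvc : v c ∈ W := hW c (by simp)
          have hvd : v d ∈ W := aux_force W (by linear_combination L3 : v d + v b + v c = 0) hvb hvc
          rw [hcol_W _ hT1c (by rw [hS1]; exact L1) W hWF hW,
            hcol_W _ hT2c (by rw [hS2]; exact L2) W hWF (hmem3 a b d W hva hvb hvd)]
        · by_cases hQ2 : ∃ W, W ∈ F ∧ ∀ i ∈ ({a, b, d} : Finset (Fin n)), v i ∈ W
          · exfalso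
            obtain ⟨W, hWF, hW⟩ := hQ2
            have hva : v a ∈ W := hW a (by simp)
            have hvb : v b ∈ W := hW b (by simp)
            have hvd : v d ∈ W := hW d (by simp)
            have hvc : v c ∈ W := aux_force W (by linear_combination L3 : v c + v b + v d = 0) hvb hvd
            exact hQ1 ⟨W, hWF, hmem3 a b c W hva hvb hvc⟩
          · rw [hcol_none _ hT1c (by rw [hS1]; exact L1) hQ1,
              hcol_none _ hT2c (by rw [hS2]; exact L2) hQ2]
      · -- no lines
        by_cases hQ1 : ∃ W, W ∈ F ∧ ∀ i ∈ ({a, b, c} : Finset (Fin n)), v i ∈ W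
        · obtain ⟨W, hWF, hW1⟩ := hQ1
          by_cases hQ2 : ∃ W', W' ∈ F ∧ ∀ i ∈ ({a, b, d} : Finset (Fin n)), v i ∈ W'
          · obtain ⟨W', hW'F, hW2⟩ := hQ2
            have heq : W' = W := huniq W' W hW'F hWF a b hab
              (hW2 a (by simp)) (hW2 b (by simp)) (hW1 a (by simp)) (hW1 b (by simp))
            subst heq
            exact h12 (by
              rw [hcol_W _ hT1c (by rw [hS1]; exact L1) W' hWF hW1,
                hcol_W _ hT2c (by rw [hS2]; exact L2) W' hWF hW2])
          · by_cases hQ3 : ∃ W', W' ∈ F ∧ ∀ i ∈ ({b, c, d} : Finset (Fin n)), v i ∈ W'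
            · obtain ⟨W', hW'F, hW3⟩ := hQ3
              have heq : W' = W := huniq W' W hW'F hWF b c hbc
                (hW3 b (by simp)) (hW3 c (by simp)) (hW1 b (by simp)) (hW1 c (by simp))
              subst heq
              exact h13 (by
                rw [hcol_W _ hT1c (by rw [hS1]; exact L1) W' hWF hW1,
                  hcol_W _ hT3c (by rw [hS3]; exact L3) W' hWF hW3])
            · exact h23 (by
                rw [hcol_none _ hT2c (by rw [hS2]; exact L2) hQ2,
                  hcol_none _ hT3c (by rw [hS3]; exact L3) hQ3])
        · by_cases hQ2 : ∃ W, W ∈ F ∧ ∀ i ∈ ({a, b, d} : Finset (Fin n)), v i ∈ W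
          · by_cases hQ3 : ∃ W, W ∈ F ∧ ∀ i ∈ ({b, c, d} : Finset (Fin n)), v i ∈ W
            · obtain ⟨W, hWF, hW2⟩ := hQ2
              obtain ⟨W', hW'F, hW3⟩ := hQ3
              have heq : W' = W := huniq W' W hW'F hWF b d hbd
                (hW3 b (by simp)) (hW3 d (by simp)) (hW2 b (by simp)) (hW2 d (by simp))
              subst heq
              exact h23 (by
                rw [hcol_W _ hT2c (by rw [hS2]; exact L2) W' hWF hW2,
                  hcol_W _ hT3c (by rw [hS3]; exact L3) W' hWF hW3])
            · exact h13 (by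
                rw [hcol_none _ hT1c (by rw [hS1]; exact L1) hQ1,
                  hcol_none _ hT3c (by rw [hS3]; exact L3) hQ3])
          · exact h12 (by
              rw [hcol_none _ hT1c (by rw [hS1]; exact L1) hQ1,
                hcol_none _ hT2c (by rw [hS2]; exact L2) hQ2])
  · -- color count
    set Lines : Finset (Finset (Fin n)) :=
      univ.filter (fun T => T.card = 3 ∧ ∑ i ∈ T, v i = 0) with hLines
    have hLine3 : ∀ T ∈ Lines, T.card = 3 := by
      intro T hT; rw [hLines, mem_filter] at hT; exact hT.2.1
    have hLine0 : ∀ T ∈ Lines, (∑ i ∈ T, v i) = 0 := by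
      intro T hT; rw [hLines, mem_filter] at hT; exact hT.2.2
    have hLineInt : ∀ T1 ∈ Lines, ∀ T2 ∈ Lines, T1 ≠ T2 → (T1 ∩ T2).card ≤ 1 := by
      intro T1 h1 T2 h2 hne
      by_contra hgt
      push_neg at hgt
      obtain ⟨x, hx, y, hy, hxy⟩ := aux_two_of_card hgt
      rw [mem_inter] at hx hy
      obtain ⟨z1, hz1x, hz1y, hT1⟩ := aux_exists_third (hLine3 T1 h1) hx.1 hy.1 hxy
      obtain ⟨z2, hz2x, hz2y, hT2⟩ := aux_exists_third (hLine3 T2 h2) hx.2 hy.2 hxy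
      have e1 : v x + v y + v z1 = 0 := by
        have := hLine0 T1 h1
        rwa [hT1, aux_triple_sum v hxy (Ne.symm hz1x) (Ne.symm hz1y)] at this
      have e2 : v x + v y + v z2 = 0 := by
        have := hLine0 T2 h2
        rwa [hT2, aux_triple_sum v hxy (Ne.symm hz2x) (Ne.symm hz2y)] at this
      have hz12 : z1 = z2 := hv (by linear_combination e1 - e2)
      exact hne (by rw [hT1, hT2, hz12])
    have hcover : ∀ p : Finset (Fin n), p.card = 2 →
        ∃ T ∈ Lines, p ∈ T.powersetCard 2 := by
      intro p hp
      obtain ⟨x, y, hxy, rfl⟩ := Finset.card_eq_two.mp hp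
      have hw0 : -(v x + v y) ≠ 0 := by
        intro h0
        rw [neg_eq_zero] at h0
        exact hxy (hv (by linear_combination h0 - hchar (v y)))
      obtain ⟨z, hz⟩ := hvs _ hw0
      have hzx : z ≠ x := by
        intro h
        rw [h] at hz
        exact hv0 y (by linear_combination hz - hchar (v x))
      have hzy : z ≠ y := by
        intro h
        rw [h] at hz
        exact hv0 x (by linear_combination hz - hchar (v y))
      refine ⟨{x, y, z}, ?_, ?_⟩
      · rw [hLines, mem_filter]
        refine ⟨mem_univ _, aux_triple_card hxy (Ne.symm hzx) (Ne.symm hzy), ?_⟩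
        rw [aux_triple_sum v hxy (Ne.symm hzx) (Ne.symm hzy), hz]
        ring
      · rw [mem_powersetCard]
        exact ⟨by intro t ht; simp only [mem_insert, mem_singleton] at ht ⊢; tauto, hp⟩
    have hLinesMax : ∀ P : Finset (Finset (Fin n)), IsPSTS n P → P.card ≤ Lines.card := by
      intro P hP
      obtain ⟨hP3, hPint⟩ := hP
      have h1 := aux_biUnion_card P hP3 hPint
      have h2 := aux_biUnion_card Lines hLine3 hLineInt
      have hsub : (P.biUnion fun T => T.powersetCard 2) ⊆
          (Lines.biUnion fun T => T.powersetCard 2) := by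
        intro p hp
        rw [Finset.mem_biUnion] at hp
        obtain ⟨T, hT, hpT⟩ := hp
        rw [mem_powersetCard] at hpT
        obtain ⟨T', hT', hmem⟩ := hcover p hpT.2
        exact Finset.mem_biUnion.mpr ⟨T', hT', hmem⟩
      have hle := Finset.card_le_card hsub
      rw [h1, h2] at hle
      omega
    have hmP : mPSTS n ≤ Lines.card := by
      simp only [mPSTS]
      have hne : {k : ℕ | ∃ P : Finset (Finset (Fin n)), IsPSTS n P ∧ P.card = k}.Nonempty :=
        ⟨0, ∅, ⟨fun T hT => absurd hT (Finset.notMem_empty T),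
          fun T1 h1 => absurd h1 (Finset.notMem_empty T1)⟩, rfl⟩
      apply csSup_le hne
      rintro k ⟨P, hP, rfl⟩
      exact hLinesMax P hP
    have hTW : ∀ W ∈ F, ∃ T : Finset (Fin n), T.card = 3 ∧ (∑ i ∈ T, v i) ≠ 0 ∧
        ∀ i ∈ T, v i ∈ W := by
      intro W hW
      have h3 : Module.finrank (ZMod 2) ↥W = 3 := hF3 W hW
      let b := (Module.finBasis (ZMod 2) ↥W).reindex (finCongr h3)
      obtain ⟨i0, hi0⟩ := hvs ((b 0 : ↥W) : Fin s → ZMod 2)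
        (fun h => b.ne_zero 0 (Subtype.ext h))
      obtain ⟨i1, hi1⟩ := hvs ((b 1 : ↥W) : Fin s → ZMod 2)
        (fun h => b.ne_zero 1 (Subtype.ext h))
      obtain ⟨i2, hi2⟩ := hvs ((b 2 : ↥W) : Fin s → ZMod 2)
        (fun h => b.ne_zero 2 (Subtype.ext h))
      have hbne : ∀ k l : Fin 3, k ≠ l → ((b k : ↥W) : Fin s → ZMod 2) ≠ (b l : ↥W) := by
        intro k l hkl h
        exact hkl (b.injective (Subtype.ext h))
      have h01 : i0 ≠ i1 := fun h => hbne 0 1 (by decide) (by rw [← hi0, ← hi1, h])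
      have h02 : i0 ≠ i2 := fun h => hbne 0 2 (by decide) (by rw [← hi0, ← hi2, h])
      have h12' : i1 ≠ i2 := fun h => hbne 1 2 (by decide) (by rw [← hi1, ← hi2, h])
      refine ⟨{i0, i1, i2}, aux_triple_card h01 h02 h12', ?_, ?_⟩
      · rw [aux_triple_sum v h01 h02 h12', hi0, hi1, hi2]
        intro h0
        have h0' : (b 0 : ↥W) + b 1 + b 2 = 0 := by
          apply Subtype.ext
          push_cast
          exact h0
        have hli := Fintype.linearIndependent_iff.mp b.linearIndependent (fun _ => (1 : ZMod 2))
        have hsum0 : ∑ k : Fin 3, (1 : ZMod 2) • b k = 0 := by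
          rw [Fin.sum_univ_three, one_smul, one_smul, one_smul]
          exact h0'
        exact one_ne_zero (hli hsum0 0)
      · intro i hi
        simp only [mem_insert, mem_singleton] at hi
        rcases hi with rfl | rfl | rfl
        · rw [hi0]; exact (b 0).2
        · rw [hi1]; exact (b 1).2
        · rw [hi2]; exact (b 2).2
    have hnum : Lines.card + F.card ≤ numColors n 3 col := by
      simp only [numColors]
      set img := ((Finset.univ : Finset (Finset (Fin n))).filter
        (fun e => e.card = 3)).image col with himg
      have hAsub : Lines.image (fun T => 3 * encT T) ⊆ img := by
        intro x hx
        rw [mem_image] at hx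
        obtain ⟨T, hT, rfl⟩ := hx
        rw [himg, mem_image]
        exact ⟨T, mem_filter.mpr ⟨mem_univ _, hLine3 T hT⟩,
          hcol_line T (hLine3 T hT) (hLine0 T hT)⟩
      have hBsub : F.image (fun W => 3 * encW W + 1) ⊆ img := by
        intro x hx
        rw [mem_image] at hx
        obtain ⟨W, hW, rfl⟩ := hx
        obtain ⟨T, hTc, hTs, hTm⟩ := hTW W hW
        rw [himg, mem_image]
        exact ⟨T, mem_filter.mpr ⟨mem_univ _, hTc⟩, hcol_W T hTc hTs W hW hTm⟩
      have hdisj : Disjoint (Lines.image (fun T => 3 * encT T))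
          (F.image (fun W => 3 * encW W + 1)) := by
        rw [Finset.disjoint_left]
        intro x hx hy
        rw [mem_image] at hx hy
        obtain ⟨T, -, hT⟩ := hx
        obtain ⟨W, -, hW⟩ := hy
        omega
      have hcardA : (Lines.image (fun T => 3 * encT T)).card = Lines.card :=
        Finset.card_image_of_injective _ (fun x y h => hencT (by omega))
      have hcardB : (F.image (fun W => 3 * encW W + 1)).card = F.card :=
        Finset.card_image_of_injective _ (fun x y h => hencW (by omega))
      calc Lines.card + F.card
          = ((Lines.image (fun T => 3 * encT T)) ∪
              (F.image (fun W => 3 * encW W + 1))).card := by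
            rw [Finset.card_union_of_disjoint hdisj, hcardA, hcardB]
        _ ≤ img.card := Finset.card_le_card (Finset.union_subset hAsub hBsub)
    calc mPSTS n + maxSubspaceFamily s ≤ Lines.card + F.card := by
          rw [← hFcard]; exact Nat.add_le_add hmP le_rfl
      _ ≤ numColors n 3 col := hnum
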